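/- Let a ∈ M(α,β,Ω) and let P_pot : [L²(Ω)]^d → ∇H¹₀(Ω) denote the L²-orthogonal projection onto the space of gradients of H¹₀(Ω) functions. Define the a-flux-norm of w ∈ H¹₀(Ω) by ‖w‖_{a-flux} := ‖P_pot(a∇w)‖_{L²(Ω)}. Then the flux norm is equivalent to the energy norm: α‖∇w‖_{L²(Ω)} ≤ ‖w‖_{a-flux} ≤ β‖∇w‖_{L²(Ω)} for all w ∈ H¹₀(Ω). -/

import Mathlib

open scoped RealInnerProductSpace

/-- the `a`-flux norm `‖w‖_{a-flux} = ‖P_pot(a∇w)‖_{L²}` is equivalent to the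
energy norm: `α‖∇w‖ ≤ ‖P_pot(a∇w)‖ ≤ β‖∇w‖`.  Here `H = [L²(Ω)]^d`, `G = ∇H¹₀(Ω)` is the
closed subspace of potential fields, `P_pot = orthogonalProjection G`, `grad w = ∇w` and
`flux w = a∇w`; the hypotheses `hlow`, `hup` encode the uniform spectral bounds
`α|ξ|² ≤ a(x)ξ·ξ ≤ β|ξ|²` of `a ∈ M(α,β,Ω)`. -/
theorem stmt1 {V H : Type*} [AddCommGroup V] [Module ℝ V]
    [NormedAddCommGroup H] [InnerProductSpace ℝ H] [CompleteSpace H]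
    (α β : ℝ) (hα : 0 < α) (hαβ : α ≤ β)
    (G : Submodule ℝ H) (hGclosed : IsClosed (G : Set H)) [G.HasOrthogonalProjection]
    (grad : V →ₗ[ℝ] H)  -- `w ↦ ∇w`
    (flux : V →ₗ[ℝ] H)  -- `w ↦ a∇w`
    (hrange : ∀ w : V, grad w ∈ G)
    (hlow : ∀ w : V, α * ‖grad w‖ ^ 2 ≤ ⟪flux w, grad w⟫)
    (hup : ∀ w : V, ‖flux w‖ ≤ β * ‖grad w‖) :
    ∀ w : V, α * ‖grad w‖ ≤ ‖(G.orthogonalProjectionOnto (flux w) : H)‖ ∧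
      ‖(G.orthogonalProjectionOnto (flux w) : H)‖ ≤ β * ‖grad w‖ := by
  intro w
  set P : H := (G.orthogonalProjectionOnto (flux w) : H) with hP
  have hproj : ⟪flux w, grad w⟫ = ⟪P, grad w⟫ := by
    have h0 := Submodule.starProjection_inner_eq_zero (K := G) (flux w) (grad w) (hrange w)
    have : ⟪flux w, grad w⟫ - ⟪P, grad w⟫ = 0 := by
      rw [← inner_sub_left]; exact h0
    linarith
  have hupper : ‖P‖ ≤ β * ‖grad w‖ := by
    have h1 : ‖P‖ ≤ ‖flux w‖ := by
      calc ‖P‖ ≤ ‖G.orthogonalProjectionOnto‖ * ‖flux w‖ := (G.orthogonalProjectionOnto).le_opNorm _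
      _ ≤ 1 * ‖flux w‖ := by
          have := Submodule.orthogonalProjectionOnto_norm_le G
          nlinarith [norm_nonneg (flux w)]
      _ = ‖flux w‖ := one_mul _
    exact h1.trans (hup w)
  refine ⟨?_, hupper⟩
  have hcs : ⟪P, grad w⟫ ≤ ‖P‖ * ‖grad w‖ := real_inner_le_norm _ _
  have key : α * ‖grad w‖ ^ 2 ≤ ‖P‖ * ‖grad w‖ := by
    calc α * ‖grad w‖ ^ 2 ≤ ⟪flux w, grad w⟫ := hlow w
    _ = ⟪P, grad w⟫ := hproj
    _ ≤ ‖P‖ * ‖grad w‖ := hcs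
  rcases eq_or_lt_of_le (norm_nonneg (grad w)) with h | h
  · rw [← h]; simp
  · have := le_of_mul_le_mul_right (by nlinarith : (α * ‖grad w‖) * ‖grad w‖ ≤ ‖P‖ * ‖grad w‖) h
    exact this
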